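/- If f : Ξ_out → ℂ is Δσ-twisted positive definite (where Δσ = σ_out − S^⊤ σ_in S for a linear map S : Ξ_out → Ξ_in) and χ : Ξ_in → ℂ is σ_in-twisted positive definite, then the function ξ ↦ f(ξ)·χ(Sξ) is σ_out-twisted positive definite. -/

import Mathlib

open Complex BigOperators

/-- The quadratic form associated to the σ-twisted matrix
`M_{kℓ} = χ(ξ_ℓ − ξ_k) · exp(−(i/2) σ(ξ_k, ξ_ℓ))`. -/
noncomputable def twistedSum {Ξ : Type*} [AddCommGroup Ξ] (σ : Ξ → Ξ → ℝ) (χ : Ξ → ℂ)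
    {N : ℕ} (ξ : Fin N → Ξ) (c : Fin N → ℂ) : ℂ :=
  ∑ k, ∑ l, (starRingEnd ℂ) (c k) * c l * χ (ξ l - ξ k) *
    Complex.exp (-(Complex.I / 2) * ((σ (ξ k) (ξ l) : ℝ) : ℂ))

/-- `χ` is σ-twisted positive definite: every matrix
`M_{kℓ} = χ(ξ_ℓ − ξ_k) exp(−(i/2)σ(ξ_k,ξ_ℓ))` is positive semidefinite, expressed
via nonnegativity of the associated quadratic form. -/
def IsTwistedPosDef {Ξ : Type*} [AddCommGroup Ξ] (σ : Ξ → Ξ → ℝ) (χ : Ξ → ℂ) : Prop :=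
  ∀ (N : ℕ) (ξ : Fin N → Ξ) (c : Fin N → ℂ),
    0 ≤ (twistedSum σ χ ξ c).re ∧ (twistedSum σ χ ξ c).im = 0
open scoped ComplexOrder

lemma posSemidef_of_quad' {N : ℕ} (M : Matrix (Fin N) (Fin N) ℂ)
    (h : ∀ x : Fin N → ℂ, 0 ≤ (dotProduct (star x) (M.mulVec x)).re ∧ (dotProduct (star x) (M.mulVec x)).im = 0) :
    M.PosSemidef := by
  have herm : M.IsHermitian := by
    rw [Matrix.isHermitian_iff_isSymmetric, LinearMap.isSymmetric_iff_inner_map_self_real]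
    intro v
    set x : Fin N → ℂ := (WithLp.equiv 2 (Fin N → ℂ)) v with hx
    have hv : v = (WithLp.equiv 2 (Fin N → ℂ)).symm x := rfl
    rw [hv, WithLp.equiv_symm_apply, Matrix.toEuclideanLin_toLp, EuclideanSpace.inner_toLp_toLp, dotProduct_comm]
    have hconj : (starRingEnd ℂ) (dotProduct (star (Matrix.toLin' M x)) x) = dotProduct (star x) (M.mulVec x) := by
      simp [dotProduct, Matrix.toLin'_apply, map_sum, mul_comm]
    have hreal : (starRingEnd ℂ) (dotProduct (star x) (M.mulVec x)) = dotProduct (star x) (M.mulVec x) := by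
      rw [Complex.conj_eq_iff_im]; exact (h x).2
    calc (starRingEnd ℂ) (dotProduct (star (Matrix.toLin' M x)) x) = dotProduct (star x) (M.mulVec x) := hconj
      _ = (starRingEnd ℂ) (dotProduct (star x) (M.mulVec x)) := hreal.symm
      _ = dotProduct (star (Matrix.toLin' M x)) x := by rw [← hconj, Complex.conj_conj]
  exact Matrix.PosSemidef.of_dotProduct_mulVec_nonneg herm fun x => by
    rw [Complex.le_def]
    exact ⟨by simpa using (h x).1, by simpa using (h x).2.symm⟩


/-- If f is Δσ-twisted positive definite (Δσ = σ_out − S^⊤σ_in S) and χ is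
σ_in-twisted positive definite, then ξ ↦ f(ξ)·χ(Sξ) is σ_out-twisted positive definite. -/
theorem twisted_posdef_channel_output {Ξout Ξin : Type*}
    [AddCommGroup Ξout] [Module ℝ Ξout] [AddCommGroup Ξin] [Module ℝ Ξin]
    (σout : Ξout →ₗ[ℝ] Ξout →ₗ[ℝ] ℝ) (σin : Ξin →ₗ[ℝ] Ξin →ₗ[ℝ] ℝ)
    (hout : ∀ ξ η : Ξout, σout ξ η = - σout η ξ)
    (hin : ∀ ξ η : Ξin, σin ξ η = - σin η ξ)
    (S : Ξout →ₗ[ℝ] Ξin) (f : Ξout → ℂ) (χ : Ξin → ℂ)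
    (hf : IsTwistedPosDef (fun ξ η => σout ξ η - σin (S ξ) (S η)) f)
    (hχ : IsTwistedPosDef (fun ξ η => σin ξ η) χ) :
    IsTwistedPosDef (fun ξ η => σout ξ η) (fun ξ => f ξ * χ (S ξ)) := by
  intro N ξ c
  set B : Matrix (Fin N) (Fin N) ℂ := fun k l =>
    χ (S (ξ l) - S (ξ k)) * Complex.exp (-(Complex.I / 2) * ((σin (S (ξ k)) (S (ξ l)) : ℝ) : ℂ))
    with hBdef
  have hBquad : ∀ x : Fin N → ℂ,
      dotProduct (star x) (B.mulVec x)
        = twistedSum (fun a b => σin a b) χ (fun k => S (ξ k)) x := by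
    intro x
    simp only [dotProduct, Matrix.mulVec, twistedSum, hBdef, Finset.mul_sum]
    refine Finset.sum_congr rfl fun k _ => Finset.sum_congr rfl fun l _ => by
      simp only [Pi.star_apply, RCLike.star_def]
      ring
  have hBpsd : B.PosSemidef := by
    refine posSemidef_of_quad' B fun x => ?_
    rw [show dotProduct (star x) (B.mulVec x)
      = twistedSum (fun a b => σin a b) χ (fun k => S (ξ k)) x from hBquad x]
    exact hχ N (fun k => S (ξ k)) x
  open scoped MatrixOrder Matrix.Norms.L2Operator in
  obtain ⟨C, hC⟩ := CStarAlgebra.nonneg_iff_eq_star_mul_self.mp hBpsd.nonneg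
  have hCentry : ∀ k l, B k l = ∑ j, (starRingEnd ℂ) (C j k) * C j l := by
    intro k l
    rw [hC]
    simp [Matrix.mul_apply, Matrix.star_eq_conjTranspose, Matrix.conjTranspose_apply]
  set s : Fin N → Fin N → Fin N → ℂ := fun j k l =>
    (starRingEnd ℂ) (c k * C j k) * (c l * C j l) * f (ξ l - ξ k) *
      Complex.exp (-(Complex.I / 2) * (((σout (ξ k) (ξ l) - σin (S (ξ k)) (S (ξ l)) : ℝ)) : ℂ))
    with hsdef
  have key : twistedSum (fun a b => σout a b) (fun a => f a * χ (S a)) ξ c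
      = ∑ j, twistedSum (fun a b => σout a b - σin (S a) (S b)) f ξ (fun k => c k * C j k) := by
    calc twistedSum (fun a b => σout a b) (fun a => f a * χ (S a)) ξ c
        = ∑ k, ∑ l, ∑ j, s j k l := by
          unfold twistedSum
          refine Finset.sum_congr rfl fun k _ => Finset.sum_congr rfl fun l _ => ?_
          have hexp : Complex.exp (-(Complex.I / 2) * ((σout (ξ k) (ξ l) : ℝ) : ℂ))
              = Complex.exp (-(Complex.I / 2) *
                  (((σout (ξ k) (ξ l) - σin (S (ξ k)) (S (ξ l)) : ℝ)) : ℂ))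
                * Complex.exp (-(Complex.I / 2) * ((σin (S (ξ k)) (S (ξ l)) : ℝ) : ℂ)) := by
            rw [← Complex.exp_add]
            congr 1
            push_cast
            ring
          have hSχ : χ (S (ξ l - ξ k)) = χ (S (ξ l) - S (ξ k)) := by rw [map_sub]
          calc (starRingEnd ℂ) (c k) * c l * ((fun a => f a * χ (S a)) (ξ l - ξ k)) *
                Complex.exp (-(Complex.I / 2) * (((fun a b => (σout a) b) (ξ k) (ξ l) : ℝ) : ℂ))
              = ((starRingEnd ℂ) (c k) * c l * f (ξ l - ξ k) *
                  Complex.exp (-(Complex.I / 2) *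
                    (((σout (ξ k) (ξ l) - σin (S (ξ k)) (S (ξ l)) : ℝ)) : ℂ)))
                * (χ (S (ξ l) - S (ξ k)) *
                  Complex.exp (-(Complex.I / 2) * ((σin (S (ξ k)) (S (ξ l)) : ℝ) : ℂ))) := by
                simp only []
                rw [hSχ, hexp]; ring
            _ = ∑ j, s j k l := by
                rw [show χ (S (ξ l) - S (ξ k)) *
                      Complex.exp (-(Complex.I / 2) * ((σin (S (ξ k)) (S (ξ l)) : ℝ) : ℂ))
                    = ∑ j, (starRingEnd ℂ) (C j k) * C j l from hCentry k l, Finset.mul_sum]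
                refine Finset.sum_congr rfl fun j _ => ?_
                simp only [hsdef, _root_.map_mul]
                ring
      _ = ∑ k, ∑ j, ∑ l, s j k l := Finset.sum_congr rfl fun _ _ => Finset.sum_comm
      _ = ∑ j, ∑ k, ∑ l, s j k l := Finset.sum_comm
      _ = ∑ j, twistedSum (fun a b => σout a b - σin (S a) (S b)) f ξ
            (fun k => c k * C j k) := by
          refine Finset.sum_congr rfl fun j _ => ?_
          unfold twistedSum
          rfl
  rw [key]
  constructor
  · rw [Complex.re_sum]
    exact Finset.sum_nonneg fun j _ => (hf N ξ fun k => c k * C j k).1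
  · rw [Complex.im_sum]
    exact Finset.sum_eq_zero fun j _ => (hf N ξ fun k => c k * C j k).2
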